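/- Let n ∈ ℕ with n ≥ 1, let α > 0, let k ∈ {1,…,n}, and let p_k, p_{k+1}, …, p_n be non-negative real numbers such that ∑_{j=i}^{n} p_j ≤ α·(n+1-i) for every i ∈ {k, k+1, …, n}. Then ∑_{j=k}^{n} p_j/(n+1-j) ≤ α·∑_{j=k}^{n} 1/(n+1-j). -/

import Mathlib

open scoped BigOperators

lemma aux_abel (α : ℝ) : ∀ d n k : ℕ, k + d = n →
    ∀ p : ℕ → ℝ,
    (∀ i ∈ Finset.Icc k n, (∑ j ∈ Finset.Icc i n, p j) ≤ α * ((n : ℝ) + 1 - (i : ℝ))) →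
    (∑ j ∈ Finset.Icc k n, p j / ((n : ℝ) + 1 - (j : ℝ))) ≤
      (∑ j ∈ Finset.Icc k n, p j) / ((n : ℝ) + 1 - (k : ℝ)) +
        α * ((∑ j ∈ Finset.Icc k n, 1 / ((n : ℝ) + 1 - (j : ℝ))) - 1) := by
  intro d
  induction d with
  | zero =>
    intro n k hkd p hsum
    subst hkd
    simp
  | succ d ih =>
    intro n k hkd p hsum
    have hkn : k + 1 ≤ n := by omega
    have hicc : Finset.Icc k n = insert k (Finset.Icc (k + 1) n) := by
      rw [Finset.Icc_add_one_left_eq_Ioc, Finset.Ioc_insert_left (by omega)]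
    have hknot : k ∉ Finset.Icc (k + 1) n := by simp
    have ih' := ih n (k + 1) (by omega) p (fun i hi => hsum i (by
      simp only [Finset.mem_Icc] at hi ⊢; omega))
    set a : ℝ := (n : ℝ) + 1 - (k : ℝ) with ha
    have ha2 : (2 : ℝ) ≤ a := by
      rw [ha]; have : (k : ℝ) + 1 ≤ (n : ℝ) := by exact_mod_cast hkn
      linarith
    have hk1 : ((n : ℝ) + 1 - ((k : ℕ) + 1 : ℕ)) = a - 1 := by push_cast; ring
    have hS : (∑ j ∈ Finset.Icc (k + 1) n, p j) ≤ α * (a - 1) := by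
      have := hsum (k + 1) (by simp [hkn])
      rwa [hk1] at this
    rw [hicc, Finset.sum_insert hknot, Finset.sum_insert hknot, Finset.sum_insert hknot]
    rw [hk1] at ih'
    set S : ℝ := ∑ j ∈ Finset.Icc (k + 1) n, p j
    set T : ℝ := ∑ j ∈ Finset.Icc (k + 1) n, p j / ((n : ℝ) + 1 - (j : ℝ))
    set W : ℝ := ∑ j ∈ Finset.Icc (k + 1) n, 1 / ((n : ℝ) + 1 - (j : ℝ))
    -- need: p k / a + T ≤ (p k + S)/a + α * (1/a + W - 1)
    have key : S / (a - 1) ≤ S / a + α / a := by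
      rw [← add_div, div_le_div_iff₀ (by linarith) (by linarith)]
      nlinarith [hS]
    calc p k / a + T ≤ p k / a + (S / (a - 1) + α * (W - 1)) := by linarith
      _ ≤ p k / a + (S / a + α / a + α * (W - 1)) := by linarith
      _ = (p k + S) / a + α * (1 / a + W - 1) := by
          field_simp
          ring
  

theorem stmt_0 (n : ℕ) (hn : 1 ≤ n) (α : ℝ) (hα : 0 < α) (k : ℕ) (hk1 : 1 ≤ k) (hkn : k ≤ n)
    (p : ℕ → ℝ) (hp : ∀ j ∈ Finset.Icc k n, 0 ≤ p j)
    (hsum : ∀ i ∈ Finset.Icc k n, (∑ j ∈ Finset.Icc i n, p j) ≤ α * ((n : ℝ) + 1 - (i : ℝ))) :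
    (∑ j ∈ Finset.Icc k n, p j / ((n : ℝ) + 1 - (j : ℝ))) ≤
      α * ∑ j ∈ Finset.Icc k n, 1 / ((n : ℝ) + 1 - (j : ℝ)) := by
  have h := aux_abel α (n - k) n k (by omega) p hsum
  have ha : (0 : ℝ) < (n : ℝ) + 1 - (k : ℝ) := by
    have : (k : ℝ) ≤ (n : ℝ) := by exact_mod_cast hkn
    linarith
  have hS : (∑ j ∈ Finset.Icc k n, p j) ≤ α * ((n : ℝ) + 1 - (k : ℝ)) :=
    hsum k (by simp [hkn])
  have h2 : (∑ j ∈ Finset.Icc k n, p j) / ((n : ℝ) + 1 - (k : ℝ)) ≤ α := by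
    rw [div_le_iff₀ ha]; linarith
  linarith
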